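/- Let s and τ be real numbers with 1−(2/3)κ ≤ s < 1 and 0 < τ < (1−s)/2. If exp(f(s+τ) − f(s−τ)) = 1 + (2/3)κ, then τ·exp(f(s−τ)) ≥ κ²/(6(1 + (2/3)κ)). -/

import Mathlib

/-- With `κ` and `f` as in the context: if `1 - (2/3)κ ≤ s < 1`, `0 < τ < (1-s)/2`
and `exp(f(s+τ) - f(s-τ)) = 1 + (2/3)κ`, then
`τ · exp(f(s-τ)) ≥ κ²/(6(1 + (2/3)κ))`. -/
theorem stmt_11 (κ : ℝ) (hκ0 : 0 < κ) (hκ1 : κ < 1/8)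
    (f : ℝ → ℝ)
    (hf : ∀ s : ℝ, f s = if s ≤ 1 - κ then 0 else -Real.log (1 - ((s - 1 + κ) / κ)^2))
    (s τ : ℝ) (hs1 : 1 - (2/3) * κ ≤ s) (hs2 : s < 1)
    (hτ1 : 0 < τ) (hτ2 : τ < (1 - s)/2)
    (heq : Real.exp (f (s + τ) - f (s - τ)) = 1 + (2/3) * κ) :
    κ^2 / (6 * (1 + (2/3) * κ)) ≤ τ * Real.exp (f (s - τ)) := by
  have hκne : κ ≠ 0 := ne_of_gt hκ0
  have hbgt : 1 - κ < s - τ := by nlinarith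
  have halt : s + τ < 1 := by nlinarith
  set A := s + τ - 1 + κ with hA
  set B := s - τ - 1 + κ with hB
  have hB0 : 0 < B := by simp only [hB]; linarith
  have hABlt : B < A := by simp only [hA, hB]; linarith
  have hAκ : A < κ := by simp only [hA]; linarith
  have h1b : 0 < 1 - (B/κ)^2 := by
    have h1 : B/κ < 1 := by
      rw [div_lt_one hκ0]; linarith
    have h2 : 0 < B/κ := div_pos hB0 hκ0
    nlinarith
  have h1a : 0 < 1 - (A/κ)^2 := by
    have h1 : A/κ < 1 := by rw [div_lt_one hκ0]; linarith
    have h2 : 0 < A/κ := div_pos (lt_trans hB0 hABlt) hκ0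
    nlinarith
  have hfb : f (s - τ) = -Real.log (1 - (B/κ)^2) := by
    rw [hf]; rw [if_neg (by linarith)]
  have hfa : f (s + τ) = -Real.log (1 - (A/κ)^2) := by
    rw [hf]; rw [if_neg (by linarith)]
  have hexpb : Real.exp (f (s - τ)) = (1 - (B/κ)^2)⁻¹ := by
    rw [hfb, Real.exp_neg, Real.exp_log h1b]
  have hexpa : Real.exp (f (s + τ)) = (1 - (A/κ)^2)⁻¹ := by
    rw [hfa, Real.exp_neg, Real.exp_log h1a]
  have hKA : κ^2 - A^2 = κ^2 * (1 - (A/κ)^2) := by field_simp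
  have hKB : κ^2 - B^2 = κ^2 * (1 - (B/κ)^2) := by field_simp
  have hKApos : 0 < κ^2 - A^2 := by rw [hKA]; positivity
  have hKBpos : 0 < κ^2 - B^2 := by rw [hKB]; positivity
  have EK : κ^2 - B^2 = (1 + (2/3) * κ) * (κ^2 - A^2) := by
    rw [Real.exp_sub, hexpa, hexpb] at heq
    field_simp at heq
    have h3 : 3 * (κ^2 * (κ^2 - B^2)) = 3 * (κ^2 * ((1 + 2/3 * κ) * (κ^2 - A^2))) := by
      linear_combination κ^2 * heq
    have h4 := mul_left_cancel₀ (show (κ:ℝ)^2 ≠ 0 by positivity)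
      (mul_left_cancel₀ (show (3:ℝ) ≠ 0 by norm_num) h3)
    linarith
  have hd : A - B = 2 * τ := by simp only [hA, hB]; ring
  have hcpos : (0:ℝ) < 1 + (2/3) * κ := by linarith
  clear_value A B
  rw [hexpb, ← div_eq_mul_inv, div_le_div_iff₀ (by positivity) h1b]
  rw [← hKB]
  -- need: κ^2 - B^2 ≤ τ * (6 * (1 + (2/3)*κ))
  have h5 : 2/3*κ*(κ^2-A^2) = 2*τ*(A+B) := by linear_combination -EK + (A+B)*hd
  have h6 : κ^2 - A^2 ≤ 6*τ := by
    nlinarith [h5, mul_nonneg hτ1.le (show (0:ℝ) ≤ 2*κ - (A+B) by linarith), hκ0]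
  calc κ^2 - B^2 = (1 + 2/3*κ) * (κ^2 - A^2) := EK
    _ ≤ (1 + 2/3*κ) * (6*τ) := mul_le_mul_of_nonneg_left h6 hcpos.le
    _ = τ * (6 * (1 + 2/3*κ)) := by ring
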